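/- Let R be the F-algebra of upper triangular 2×2 matrices over the polynomial algebra F[x]. Then the Lie subalgebra [R,R] of R⁽⁻⁾ generated by all commutators ab − ba equals the set of matrices whose only nonzero entry is the (1,2) entry (an element of F[x]), and [R,R] is not finitely generated as a Lie algebra. -/

import Mathlib

open Polynomial

def upperTriangular2 (F : Type*) [Field F] :
    Subalgebra F (Matrix (Fin 2) (Fin 2) (Polynomial F)) where
  carrier := {M | M 1 0 = 0}
  mul_mem' := by
    intro a b ha hb
    simp only [Set.mem_setOf_eq] at *
    show (a * b) 1 0 = 0
    rw [Matrix.mul_apply, Fin.sum_univ_two, ha, hb]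
    simp
  add_mem' := by
    intro a b ha hb
    simp only [Set.mem_setOf_eq] at *
    show (a + b) 1 0 = 0
    rw [Matrix.add_apply, ha, hb, add_zero]
  algebraMap_mem' := by
    intro r
    simp [Set.mem_setOf_eq, Matrix.algebraMap_matrix_apply]

attribute [local instance 100] LieRing.ofAssociativeRing

section Aux
variable {F : Type*} [Field F]

lemma ut_lowerleft (M : upperTriangular2 F) :
    (M : Matrix (Fin 2) (Fin 2) (Polynomial F)) 1 0 = 0 := M.2

lemma coe_bracket (a b : upperTriangular2 F) :
    (↑⁅a, b⁆ : Matrix (Fin 2) (Fin 2) (Polynomial F)) =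
      (a : Matrix (Fin 2) (Fin 2) (Polynomial F)) * (b : Matrix (Fin 2) (Fin 2) (Polynomial F)) -
        (b : Matrix (Fin 2) (Fin 2) (Polynomial F)) * (a : Matrix (Fin 2) (Fin 2) (Polynomial F)) := by
  rfl

/-- The strictly upper triangular matrices, as a Lie subalgebra. -/
def strictUpper (F : Type*) [Field F] : LieSubalgebra F (upperTriangular2 F) where
  carrier := {M | (M : Matrix (Fin 2) (Fin 2) (Polynomial F)) 0 0 = 0 ∧
    (M : Matrix (Fin 2) (Fin 2) (Polynomial F)) 1 1 = 0}
  add_mem' := by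
    intro a b ha hb
    simp only [Set.mem_setOf_eq, Subalgebra.coe_add, Matrix.add_apply] at *
    rw [ha.1, ha.2, hb.1, hb.2]; simp
  zero_mem' := by simp [Set.mem_setOf_eq]
  smul_mem' := by
    intro c a ha
    simp only [Set.mem_setOf_eq, SetLike.val_smul, Matrix.smul_apply] at *
    rw [ha.1, ha.2]; simp
  lie_mem' := by
    intro a b _ _
    simp only [Set.mem_setOf_eq, coe_bracket, Matrix.sub_apply, Matrix.mul_apply,
      Fin.sum_univ_two, ut_lowerleft a, ut_lowerleft b]
    constructor <;> ring

lemma mem_strictUpper (M : upperTriangular2 F) :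
    M ∈ strictUpper F ↔ ((M : Matrix (Fin 2) (Fin 2) (Polynomial F)) 0 0 = 0 ∧
      (M : Matrix (Fin 2) (Fin 2) (Polynomial F)) 1 1 = 0) := Iff.rfl

lemma mem_strictUpper_iff (M : upperTriangular2 F) :
    M ∈ strictUpper F ↔
      ∃ p : Polynomial F, (M : Matrix (Fin 2) (Fin 2) (Polynomial F)) = !![0, p; 0, 0] := by
  rw [mem_strictUpper]
  constructor
  · rintro ⟨h1, h2⟩
    refine ⟨(M : Matrix (Fin 2) (Fin 2) (Polynomial F)) 0 1, ?_⟩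
    ext i j
    fin_cases i <;> fin_cases j <;>
      simp [h1, h2, ut_lowerleft M]
  · rintro ⟨p, hp⟩
    constructor <;> rw [hp] <;> simp

end Aux

theorem upperTriangular2_commutator_eq_and_not_fg
    (F : Type*) [Field F] (hchar : (2 : F) ≠ 0) :
    ((LieSubalgebra.lieSpan F (upperTriangular2 F)
        {x | ∃ a b : upperTriangular2 F, x = ⁅a, b⁆} : Set (upperTriangular2 F)) =
      {M : upperTriangular2 F |
        ∃ p : Polynomial F,
          (M : Matrix (Fin 2) (Fin 2) (Polynomial F)) = !![0, p; 0, 0]}) ∧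
    ¬ ∃ S : Finset (upperTriangular2 F),
        (S : Set (upperTriangular2 F)) ⊆
          (LieSubalgebra.lieSpan F (upperTriangular2 F)
            {x | ∃ a b : upperTriangular2 F, x = ⁅a, b⁆} : Set (upperTriangular2 F)) ∧
        LieSubalgebra.lieSpan F (upperTriangular2 F) (S : Set (upperTriangular2 F)) =
          LieSubalgebra.lieSpan F (upperTriangular2 F)
            {x | ∃ a b : upperTriangular2 F, x = ⁅a, b⁆} := by
  set commSet : Set (upperTriangular2 F) := {x | ∃ a b : upperTriangular2 F, x = ⁅a, b⁆}
  -- the idempotent e₁₁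
  have hE : (!![1, 0; 0, 0] : Matrix (Fin 2) (Fin 2) (Polynomial F)) 1 0 = 0 := by simp
  set E : upperTriangular2 F := ⟨!![1, 0; 0, 0], hE⟩ with hEdef
  -- every strictly upper triangular matrix is a commutator
  have hsuComm : ∀ M : upperTriangular2 F, M ∈ strictUpper F → M ∈ commSet := by
    intro M hM
    obtain ⟨p, hp⟩ := (mem_strictUpper_iff M).mp hM
    refine ⟨E, M, ?_⟩
    apply Subtype.ext
    rw [coe_bracket]
    show (M : Matrix (Fin 2) (Fin 2) (Polynomial F)) = _
    rw [hp]
    show _ = (!![1,0;0,0] : Matrix (Fin 2) (Fin 2) (Polynomial F)) * _ - _ * !![1,0;0,0]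
    ext i j
    fin_cases i <;> fin_cases j <;>
      simp [Matrix.mul_apply, Fin.sum_univ_two]
  have hspan : LieSubalgebra.lieSpan F (upperTriangular2 F) commSet = strictUpper F := by
    apply le_antisymm
    · rw [LieSubalgebra.lieSpan_le]
      rintro x ⟨a, b, rfl⟩
      rw [SetLike.mem_coe, mem_strictUpper]
      constructor <;>
        simp [coe_bracket, Matrix.mul_apply, Fin.sum_univ_two, ut_lowerleft a,
          ut_lowerleft b] <;> ring
    · intro M hM
      exact LieSubalgebra.subset_lieSpan (hsuComm M hM)
  constructor
  · rw [hspan]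
    ext M
    exact mem_strictUpper_iff M
  · rintro ⟨S, -, hS2⟩
    rw [hspan] at hS2
    -- brackets of strictly upper triangular matrices vanish
    have hzero : ∀ x y : upperTriangular2 F, x ∈ strictUpper F → y ∈ strictUpper F →
        ⁅x, y⁆ = 0 := by
      intro x y hx hy
      obtain ⟨p, hp⟩ := (mem_strictUpper_iff x).mp hx
      obtain ⟨q, hq⟩ := (mem_strictUpper_iff y).mp hy
      apply Subtype.ext
      rw [coe_bracket, hp, hq]
      show _ = (0 : Matrix (Fin 2) (Fin 2) (Polynomial F))
      ext i j
      fin_cases i <;> fin_cases j <;>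
        simp [Matrix.mul_apply, Fin.sum_univ_two]
    have hSsub : (S : Set (upperTriangular2 F)) ⊆ strictUpper F := by
      intro s hs
      rw [← hS2]
      exact LieSubalgebra.subset_lieSpan hs
    have hspanS : Submodule.span F (S : Set (upperTriangular2 F)) ≤
        (strictUpper F).toSubmodule := Submodule.span_le.mpr hSsub
    -- the span of S is already a Lie subalgebra
    set L : LieSubalgebra F (upperTriangular2 F) :=
      { Submodule.span F (S : Set (upperTriangular2 F)) with
        lie_mem' := by
          intro x y hx hy
          have hx' := hspanS hx
          have hy' := hspanS hy
          show ⁅x, y⁆ ∈ Submodule.span F (S : Set (upperTriangular2 F))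
          rw [hzero x y hx' hy']
          exact Submodule.zero_mem _ } with hLdef
    have hle : LieSubalgebra.lieSpan F (upperTriangular2 F) (S : Set (upperTriangular2 F)) ≤ L :=
      LieSubalgebra.lieSpan_le.mpr (fun x hx => Submodule.subset_span hx)
    rw [hS2] at hle
    -- linear projection onto the (0,1) entry
    let T : upperTriangular2 F →ₗ[F] Polynomial F :=
      { toFun := fun M => (M : Matrix (Fin 2) (Fin 2) (Polynomial F)) 0 1
        map_add' := by intro a b; simp
        map_smul' := by intro c a; simp }
    have hsurj : ∀ p : Polynomial F, p ∈ Submodule.map T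
        (Submodule.span F (S : Set (upperTriangular2 F))) := by
      intro p
      have hpmem : (!![0, p; 0, 0] : Matrix (Fin 2) (Fin 2) (Polynomial F)) 1 0 = 0 := by simp
      have hmem : (⟨!![0, p; 0, 0], hpmem⟩ : upperTriangular2 F) ∈ strictUpper F := by
        rw [mem_strictUpper_iff]
        exact ⟨p, rfl⟩
      exact ⟨⟨!![0, p; 0, 0], hpmem⟩, hle hmem, rfl⟩
    have htop : Submodule.span F (T '' (S : Set (upperTriangular2 F))) = ⊤ := by
      rw [eq_top_iff]
      intro p _
      rw [← Submodule.map_span]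
      exact hsurj p
    classical
    have hfin : Module.Finite F (Polynomial F) := by
      refine ⟨⟨S.image T, ?_⟩⟩
      simpa only [Finset.coe_image] using htop
    exact Polynomial.not_finite hfin
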